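/- arXiv:cond-mat/0507379 — 4 statements merged into one kernel-verified Lean document; each statement's English description precedes it below -/
import Mathlib

section
/- Let f : ℝ → ℝ, let α_l < α_h, and suppose f admits supporting lines with the same slope q_c at both α_l and α_h (i.e., f(β) ≤ f(α_l) + q_c·(β − α_l) and f(β) ≤ f(α_h) + q_c·(β − α_h) for all β ∈ ℝ). Suppose moreover that τ(q) is finite for every q, so τ may be regarded as a function ℝ → ℝ. Then: (i) τ(q_c) = q_c·α_l − f(α_l) = q_c·α_h − f(α_h); (ii) τ(q) ≤ τ(q_c) + α_l·(q − q_c) for all q > q_c and τ(q) ≤ τ(q_c) + α_h·(q − q_c) for all q < q_c; and (iii) τ is not differentiable at q_c (there is no d ∈ ℝ with HasDerivAt τ d q_c). -/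
/-- If `f` admits supporting lines with common slope `q_c` at two points
`α_l < α_h`, and the real-valued free energy `τ(q) = inf_β (q·β − f(β))` is
finite everywhere, then (i) `τ(q_c) = q_c·α_l − f(α_l) = q_c·α_h − f(α_h)`,
(ii) `τ` lies below the lines of slopes `α_l` (for `q > q_c`) and `α_h`
(for `q < q_c`) through `(q_c, τ(q_c))`, and (iii) `τ` is not differentiable
at `q_c`. -/
theorem freeEnergy_not_differentiable_of_two_supporting_lines
    (f : ℝ → ℝ) (αl αh qc : ℝ) (hlt : αl < αh)
    (hsl : ∀ β : ℝ, f β ≤ f αl + qc * (β - αl))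
    (hsh : ∀ β : ℝ, f β ≤ f αh + qc * (β - αh))
    (hbdd : ∀ q : ℝ, BddBelow (Set.range fun β : ℝ => q * β - f β)) :
    (⨅ β : ℝ, (qc * β - f β)) = qc * αl - f αl ∧
    (⨅ β : ℝ, (qc * β - f β)) = qc * αh - f αh ∧
    (∀ q : ℝ, qc < q →
      (⨅ β : ℝ, (q * β - f β)) ≤ (⨅ β : ℝ, (qc * β - f β)) + αl * (q - qc)) ∧
    (∀ q : ℝ, q < qc →
      (⨅ β : ℝ, (q * β - f β)) ≤ (⨅ β : ℝ, (qc * β - f β)) + αh * (q - qc)) ∧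
    ¬ ∃ d : ℝ, HasDerivAt (fun q : ℝ => ⨅ β : ℝ, (q * β - f β)) d qc := by
  set τ : ℝ → ℝ := fun q : ℝ => ⨅ β : ℝ, (q * β - f β) with hτ
  have hle : ∀ q β : ℝ, τ q ≤ q * β - f β := fun q β => ciInf_le (hbdd q) β
  have h1 : τ qc = qc * αl - f αl := by
    refine le_antisymm (hle qc αl) (le_ciInf fun β => ?_)
    have := hsl β; nlinarith
  have h2 : τ qc = qc * αh - f αh := by
    refine le_antisymm (hle qc αh) (le_ciInf fun β => ?_)
    have := hsh β; nlinarith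
  have hupl : ∀ q : ℝ, τ q ≤ τ qc + αl * (q - qc) := by
    intro q
    have := hle q αl
    rw [h1]; nlinarith
  have huph : ∀ q : ℝ, τ q ≤ τ qc + αh * (q - qc) := by
    intro q
    have := hle q αh
    rw [h2]; nlinarith
  refine ⟨h1, h2, fun q _ => hupl q, fun q _ => huph q, ?_⟩
  rintro ⟨d, hd⟩
  -- right derivative: d ≤ αl
  have hdle : d ≤ αl := by
    have h := (hd.hasDerivWithinAt (s := Set.Ioi qc))
    rw [hasDerivWithinAt_iff_tendsto_slope] at h
    have hs : Set.Ioi qc \ {qc} = Set.Ioi qc := by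
      ext x; simp (config := {contextual := true}) [lt_irrefl, ne_of_gt]
    rw [hs] at h
    refine le_of_tendsto h (eventually_nhdsWithin_of_forall fun x hx => ?_)
    have hx' : (0:ℝ) < x - qc := by simpa [sub_pos] using hx
    have := hupl x
    rw [slope_def_field]
    rw [div_le_iff₀ hx']
    nlinarith
  have hdge : αh ≤ d := by
    have h := (hd.hasDerivWithinAt (s := Set.Iio qc))
    rw [hasDerivWithinAt_iff_tendsto_slope] at h
    have hs : Set.Iio qc \ {qc} = Set.Iio qc := by
      ext x; simp (config := {contextual := true}) [lt_irrefl]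
    rw [hs] at h
    refine ge_of_tendsto h (eventually_nhdsWithin_of_forall fun x hx => ?_)
    have hx' : x - qc < 0 := by simpa [sub_neg] using hx
    have := huph x
    rw [slope_def_field]
    rw [le_div_iff_of_neg hx']
    nlinarith
  linarith
end

section
/- Let f : ℝ → ℝ be concave on ℝ and suppose f is affine with slope q_c on a nondegenerate interval: there exist α_l < α_h and c ∈ ℝ with f(α) = q_c·α + c for all α ∈ [α_l, α_h]. Suppose moreover that τ(q) = inf_{β ∈ ℝ} (q·β − f(β)) is finite for every q ∈ ℝ. Then τ : ℝ → ℝ is not differentiable at q_c. -/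
/-- If `f` is concave on `ℝ` and affine with slope `q_c` on a nondegenerate
interval `[α_l, α_h]`, and its free energy `τ(q) = inf_β (q·β − f(β))` is finite
everywhere, then `τ` is not differentiable at `q_c`. -/
theorem freeEnergy_not_differentiableAt_of_affine_part
    (f : ℝ → ℝ) (hf : ConcaveOn ℝ Set.univ f)
    (αl αh qc c : ℝ) (hlt : αl < αh)
    (haff : ∀ α ∈ Set.Icc αl αh, f α = qc * α + c)
    (hbdd : ∀ q : ℝ, BddBelow (Set.range fun β : ℝ => q * β - f β)) :
    ¬ ∃ d : ℝ, HasDerivAt (fun q : ℝ => ⨅ β : ℝ, (q * β - f β)) d qc := by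
  rintro ⟨d, hd⟩
  set τ : ℝ → ℝ := fun q => ⨅ β : ℝ, (q * β - f β) with hτ
  have hfl : f αl = qc * αl + c := haff αl ⟨le_refl _, hlt.le⟩
  have hfh : f αh = qc * αh + c := haff αh ⟨hlt.le, le_refl _⟩
  -- f lies below the affine function everywhere
  have hle : ∀ β, f β ≤ qc * β + c := by
    intro β
    rcases le_or_gt β αh with h1 | h1
    · rcases le_or_gt αl β with h2 | h2
      · exact le_of_eq (haff β ⟨h2, h1⟩)
      · -- β < αl : αl = t β + s αh
        have hden : 0 < αh - β := by linarith
        set t := (αh - αl) / (αh - β) with ht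
        set s := (αl - β) / (αh - β) with hs
        have ht0 : 0 < t := by apply div_pos <;> linarith
        have hs0 : 0 ≤ s := by apply div_nonneg <;> linarith
        have hts : t + s = 1 := by rw [ht, hs]; field_simp; ring
        have hcomb : t • β + s • αh = αl := by
          simp only [smul_eq_mul, ht, hs]; field_simp; ring
        have hcomb' : t * β + s * αh = αl := by simpa [smul_eq_mul] using hcomb
        have := hf.2 (Set.mem_univ β) (Set.mem_univ αh) ht0.le hs0 hts
        rw [hcomb, hfl, hfh] at this
        simp only [smul_eq_mul] at this
        have key : qc * αl + c = t * (qc * β + c) + s * (qc * αh + c) := by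
          linear_combination (-qc) * hcomb' - c * hts
        have h3 : t * f β ≤ t * (qc * β + c) := by linarith
        exact le_of_mul_le_mul_left h3 ht0
    · -- αh < β : αh = t αl + s β
      have hden : 0 < β - αl := by linarith
      set t := (β - αh) / (β - αl) with ht
      set s := (αh - αl) / (β - αl) with hs
      have ht0 : 0 ≤ t := by apply div_nonneg <;> linarith
      have hs0 : 0 < s := by apply div_pos <;> linarith
      have hts : t + s = 1 := by rw [ht, hs]; field_simp; ring
      have hcomb : t • αl + s • β = αh := by
        simp only [smul_eq_mul, ht, hs]; field_simp; ring
      have hcomb' : t * αl + s * β = αh := by simpa [smul_eq_mul] using hcomb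
      have := hf.2 (Set.mem_univ αl) (Set.mem_univ β) ht0 hs0.le hts
      rw [hcomb, hfl, hfh] at this
      simp only [smul_eq_mul] at this
      have key : qc * αh + c = t * (qc * αl + c) + s * (qc * β + c) := by
        linear_combination (-qc) * hcomb' - c * hts
      have h3 : s * f β ≤ s * (qc * β + c) := by linarith
      exact le_of_mul_le_mul_left h3 hs0
  have hτqc : τ qc = -c := by
    apply le_antisymm
    · have := ciInf_le (hbdd qc) αl
      simpa [hτ, hfl] using this.trans_eq (by rw [hfl]; ring)
    · apply le_ciInf
      intro β
      have := hle β
      linarith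
  have hub : ∀ q β0, β0 ∈ Set.Icc αl αh → τ q ≤ (q - qc) * β0 - c := by
    intro q β0 hβ0
    have h1 : τ q ≤ q * β0 - f β0 := ciInf_le (hbdd q) β0
    rw [haff β0 hβ0] at h1
    linarith
  rw [hasDerivAt_iff_tendsto_slope] at hd
  have hR : Filter.Tendsto (slope τ qc) (nhdsWithin qc (Set.Ioi qc)) (nhds d) :=
    hd.mono_left (nhdsWithin_mono qc (fun x hx => Set.mem_compl_singleton_iff.mpr
      (ne_of_gt hx)))
  have hL : Filter.Tendsto (slope τ qc) (nhdsWithin qc (Set.Iio qc)) (nhds d) :=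
    hd.mono_left (nhdsWithin_mono qc (fun x hx => Set.mem_compl_singleton_iff.mpr
      (ne_of_lt hx)))
  have hdle : d ≤ αl := by
    refine le_of_tendsto hR ?_
    filter_upwards [self_mem_nhdsWithin] with q hq
    have hq' : 0 < q - qc := sub_pos.mpr hq
    have h1 : τ q - τ qc ≤ (q - qc) * αl := by
      have := hub q αl ⟨le_refl _, hlt.le⟩
      rw [hτqc]; linarith
    rw [slope_def_field]
    rw [div_le_iff₀ hq']
    linarith
  have hdge : αh ≤ d := by
    refine ge_of_tendsto hL ?_
    filter_upwards [self_mem_nhdsWithin] with q hq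
    have hq' : q - qc < 0 := sub_neg.mpr hq
    have h1 : τ q - τ qc ≤ (q - qc) * αh := by
      have := hub q αh ⟨hlt.le, le_refl _⟩
      rw [hτqc]; linarith
    rw [slope_def_field]
    rw [le_div_iff_of_neg hq']
    linarith
  linarith
end

section
/- Recovery of the nonconcave Ulam spectrum at α = 1/2 from the Gaussian free energy: ⨅_{(q,γ) ∈ ℝ × ℝ} (((q·(1/2) + γ·(1/4) − min (q/2 + γ/4) (q + γ − 1)) : ℝ) : EReal) = 0. -/
/-- Recovery of the nonconcave Ulam spectrum at `α = 1/2` from the Gaussian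
free energy `τ(q, γ) = min (q/2 + γ/4) (q + γ − 1)`: the generalized
Legendre–Fenchel transform of `τ` at `α = 1/2` equals `0`. -/
theorem ulam_recovery_half :
    (⨅ p : ℝ × ℝ,
      (((p.1 * (1/2) + p.2 * (1/4) - min (p.1/2 + p.2/4) (p.1 + p.2 - 1) : ℝ) : EReal)))
      = (0 : EReal) := by
  apply le_antisymm
  · have h := iInf_le (fun p : ℝ × ℝ =>
      (((p.1 * (1/2) + p.2 * (1/4) - min (p.1/2 + p.2/4) (p.1 + p.2 - 1) : ℝ) : EReal)))
      ((2 : ℝ), (0 : ℝ))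
    norm_num at h
    simpa using h
  · apply le_iInf
    intro p
    have : (0 : ℝ) ≤ p.1 * (1/2) + p.2 * (1/4) - min (p.1/2 + p.2/4) (p.1 + p.2 - 1) := by
      have := min_le_left (p.1/2 + p.2/4) (p.1 + p.2 - 1)
      linarith
    exact_mod_cast this
end

section
/- Recovery of the nonconcave Ulam spectrum at α = 1 from the Gaussian free energy: ⨅_{(q,γ) ∈ ℝ × ℝ} (((q + γ − min (q/2 + γ/4) (q + γ − 1)) : ℝ) : EReal) = 1. -/
/-- Recovery of the nonconcave Ulam spectrum at `α = 1` from the Gaussian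
free energy `τ(q, γ) = min (q/2 + γ/4) (q + γ − 1)`: the generalized
Legendre–Fenchel transform of `τ` at `α = 1` equals `1`. -/
theorem ulam_recovery_one :
    (⨅ p : ℝ × ℝ,
      (((p.1 + p.2 - min (p.1/2 + p.2/4) (p.1 + p.2 - 1) : ℝ) : EReal)))
      = (1 : EReal) := by
  apply le_antisymm
  · have h := iInf_le (fun p : ℝ × ℝ =>
      (((p.1 + p.2 - min (p.1/2 + p.2/4) (p.1 + p.2 - 1) : ℝ) : EReal))) ((0 : ℝ), (0 : ℝ))
    simpa using h
  · apply le_iInf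
    intro p
    have : (1 : ℝ) ≤ p.1 + p.2 - min (p.1/2 + p.2/4) (p.1 + p.2 - 1) := by
      have := min_le_right (p.1/2 + p.2/4) (p.1 + p.2 - 1)
      linarith
    exact_mod_cast this
end
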